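/- Let i, j ∈ {1,…,m} and suppose σ̃_{i,m}, σ̃_{j,m} > 0. Then |⟨ṽ_{j,m}, ṽ_{i,m}⟩_{L²(0,1)} − δ_{ij}| ≤ C_K²/(6·σ̃_{j,m}·σ̃_{i,m}·m²), where δ_{ij} is the Kronecker delta. -/

import Mathlib

open Real MeasureTheory

/-- The unit interval `[0,1]`. -/
def I01 : Set ℝ := Set.Icc 0 1

/-- `κ : [0,1]² → ℝ` is twice continuously differentiable, with partial derivatives
`κ10 = ∂ₓκ`, `κ01 = ∂ᵧκ`, `κ20 = ∂ₓ²κ`, `κ11 = ∂ₓ∂ᵧκ`, `κ02 = ∂ᵧ²κ`, and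
`CK` bounds the absolute values of `κ` and all its partial derivatives of order `≤ 2`
on `[0,1]²` (in the paper, `CK` is the supremum of these quantities). -/
def IsC2KernelWith (κ κ10 κ01 κ20 κ11 κ02 : ℝ → ℝ → ℝ) (CK : ℝ) : Prop :=
  (∀ x ∈ I01, ∀ y ∈ I01, HasDerivWithinAt (fun x' => κ x' y) (κ10 x y) I01 x) ∧
  (∀ x ∈ I01, ∀ y ∈ I01, HasDerivWithinAt (fun y' => κ x y') (κ01 x y) I01 y) ∧
  (∀ x ∈ I01, ∀ y ∈ I01, HasDerivWithinAt (fun x' => κ10 x' y) (κ20 x y) I01 x) ∧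
  (∀ x ∈ I01, ∀ y ∈ I01, HasDerivWithinAt (fun y' => κ10 x y') (κ11 x y) I01 y) ∧
  (∀ x ∈ I01, ∀ y ∈ I01, HasDerivWithinAt (fun y' => κ01 x y') (κ02 x y) I01 y) ∧
  ContinuousOn (fun p : ℝ × ℝ => κ p.1 p.2) (I01 ×ˢ I01) ∧
  ContinuousOn (fun p : ℝ × ℝ => κ10 p.1 p.2) (I01 ×ˢ I01) ∧
  ContinuousOn (fun p : ℝ × ℝ => κ01 p.1 p.2) (I01 ×ˢ I01) ∧
  ContinuousOn (fun p : ℝ × ℝ => κ20 p.1 p.2) (I01 ×ˢ I01) ∧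
  ContinuousOn (fun p : ℝ × ℝ => κ11 p.1 p.2) (I01 ×ˢ I01) ∧
  ContinuousOn (fun p : ℝ × ℝ => κ02 p.1 p.2) (I01 ×ˢ I01) ∧
  (∀ x ∈ I01, ∀ y ∈ I01,
    |κ x y| ≤ CK ∧ |κ10 x y| ≤ CK ∧ |κ01 x y| ≤ CK ∧
    |κ20 x y| ≤ CK ∧ |κ11 x y| ≤ CK ∧ |κ02 x y| ≤ CK)

/-- The midpoint grid points `ξ_{l,m} = (2l−1)/(2m)`. -/
noncomputable def gridPt (m l : ℕ) : ℝ := (2 * (l : ℝ) - 1) / (2 * (m : ℝ))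

lemma taylor2 (f f' f'' : ℝ → ℝ) (M : ℝ)
    (hd1 : ∀ x ∈ I01, HasDerivWithinAt f (f' x) I01 x)
    (hd2 : ∀ x ∈ I01, HasDerivWithinAt f' (f'' x) I01 x)
    (hM : ∀ x ∈ I01, |f'' x| ≤ M)
    {c x : ℝ} (hc : c ∈ I01) (hx : x ∈ I01) :
    |f x - f c - f' c * (x - c)| ≤ M * (x - c)^2 / 2 := by
  have hM0 : 0 ≤ M := le_trans (abs_nonneg _) (hM c hc)
  have hlip : ∀ t ∈ I01, |f' t - f' c| ≤ M * |t - c| := by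
    intro t ht
    have := (convex_Icc (0:ℝ) 1).norm_image_sub_le_of_norm_hasDerivWithin_le hd2
      (fun y hy => by simpa using hM y hy) hc ht
    simpa [Real.norm_eq_abs] using this
  have hsub : Set.uIcc c x ⊆ I01 := Set.uIcc_subset_Icc hc hx
  have hcontf : ContinuousOn f I01 := fun y hy => (hd1 y hy).continuousWithinAt
  have hcontf' : ContinuousOn f' I01 := fun y hy => (hd2 y hy).continuousWithinAt
  have hintf' : IntervalIntegrable f' volume c x :=
    (hcontf'.mono hsub).intervalIntegrable
  have hftc : ∫ t in c..x, f' t = f x - f c := by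
    apply intervalIntegral.integral_eq_sub_of_hasDeriv_right (hcontf.mono hsub) _ hintf'
    intro t ht
    have ht01 : I01 ∈ nhds t := by
      rcases ht with ⟨h1, h2⟩
      have h0 : (0:ℝ) < t := lt_of_le_of_lt (le_min hc.1 hx.1) h1
      have h1' : t < 1 := lt_of_lt_of_le h2 (max_le hc.2 hx.2)
      exact Icc_mem_nhds h0 h1'
    exact (((hd1 t (mem_of_mem_nhds ht01)).hasDerivAt ht01)).hasDerivWithinAt
  have hkey : ∫ t in c..x, (f' t - f' c) = f x - f c - f' c * (x - c) := by
    rw [intervalIntegral.integral_sub hintf' (intervalIntegrable_const)]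
    rw [hftc, intervalIntegral.integral_const]
    simp [smul_eq_mul]; ring
  rw [← hkey]
  rcases le_total c x with hcx | hxc
  · have hb : ∀ᵐ t ∂volume.restrict (Set.uIoc c x), |f' t - f' c| ≤ M * (t - c) := by
      refine (MeasureTheory.ae_restrict_mem measurableSet_uIoc).mono (fun t ht => ?_)
      rw [Set.uIoc_of_le hcx] at ht
      have ht01 : t ∈ I01 := ⟨le_trans hc.1 (le_of_lt ht.1), le_trans ht.2 hx.2⟩
      calc |f' t - f' c| ≤ M * |t - c| := hlip t ht01
        _ = M * (t - c) := by rw [abs_of_nonneg (by linarith [ht.1] : (0:ℝ) ≤ t - c)]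
    have hbi : IntervalIntegrable (fun t => M * (t - c)) volume c x :=
      ((continuous_const.mul (continuous_id.sub continuous_const)).intervalIntegrable c x)
    have hle : ‖∫ t in c..x, (f' t - f' c)‖ ≤ |∫ t in c..x, M * (t - c)| :=
      intervalIntegral.norm_integral_le_abs_of_norm_le
        (f := fun t => f' t - f' c) (g := fun t => M * (t - c))
        (by simpa [Real.norm_eq_abs] using hb) hbi
    have hcomp : ∫ t in c..x, M * (t - c) = M * (x - c)^2 / 2 := by
      rw [intervalIntegral.integral_const_mul]
      have : ∫ t in c..x, (t - c) = ∫ t in (c - c)..(x - c), t :=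
        intervalIntegral.integral_comp_sub_right (fun t => t) c
      rw [this, integral_id]
      ring
    rw [hcomp] at hle
    calc |∫ t in c..x, (f' t - f' c)| ≤ |M * (x - c)^2/2| := hle
      _ = M * (x - c)^2/2 := abs_of_nonneg (by positivity)
  · have hb : ∀ᵐ t ∂volume.restrict (Set.uIoc c x), |f' t - f' c| ≤ M * (c - t) := by
      refine (MeasureTheory.ae_restrict_mem measurableSet_uIoc).mono (fun t ht => ?_)
      rw [Set.uIoc_of_ge hxc] at ht
      have ht01 : t ∈ I01 := ⟨le_trans hx.1 (le_of_lt ht.1), le_trans ht.2 hc.2⟩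
      calc |f' t - f' c| ≤ M * |t - c| := hlip t ht01
        _ = M * (c - t) := by
            rw [abs_of_nonpos (by linarith [ht.2] : t - c ≤ 0)]; ring_nf
    have hbi : IntervalIntegrable (fun t => M * (c - t)) volume c x :=
      ((continuous_const.mul (continuous_const.sub continuous_id)).intervalIntegrable c x)
    have hle : ‖∫ t in c..x, (f' t - f' c)‖ ≤ |∫ t in c..x, M * (c - t)| :=
      intervalIntegral.norm_integral_le_abs_of_norm_le
        (f := fun t => f' t - f' c) (g := fun t => M * (c - t))
        (by simpa [Real.norm_eq_abs] using hb) hbi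
    have hcomp : ∫ t in c..x, M * (c - t) = -(M * (x - c)^2 / 2) := by
      rw [intervalIntegral.integral_const_mul]
      have h2 : ∫ t in c..x, (c - t) = ∫ t in (c-c)..(x - c), -t := by
        have := intervalIntegral.integral_comp_sub_right (a := c) (b := x) (fun t => -t) c
        simpa [neg_sub] using this
      rw [h2, intervalIntegral.integral_neg, integral_id]
      ring
    rw [hcomp, abs_neg] at hle
    calc |∫ t in c..x, (f' t - f' c)| ≤ |M * (x - c)^2/2| := hle
      _ = M * (x - c)^2/2 := abs_of_nonneg (by positivity)

lemma midpoint_err (f f' f'' : ℝ → ℝ) (M : ℝ)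
    (hd1 : ∀ x ∈ I01, HasDerivWithinAt f (f' x) I01 x)
    (hd2 : ∀ x ∈ I01, HasDerivWithinAt f' (f'' x) I01 x)
    (hM : ∀ x ∈ I01, |f'' x| ≤ M)
    {c h : ℝ} (hh : 0 < h) (hsub : Set.Icc (c - h) (c + h) ⊆ I01) :
    |(∫ x in (c-h)..(c+h), f x) - 2 * h * f c| ≤ M * h^3 / 3 := by
  have hc : c ∈ I01 := hsub ⟨by linarith, by linarith⟩
  have hM0 : 0 ≤ M := le_trans (abs_nonneg _) (hM c hc)
  have hcontf : ContinuousOn f I01 := fun y hy => (hd1 y hy).continuousWithinAt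
  have huIcc : Set.uIcc (c-h) (c+h) ⊆ I01 := by
    rw [Set.uIcc_of_le (by linarith)]; exact hsub
  have hif : IntervalIntegrable f volume (c-h) (c+h) :=
    (hcontf.mono huIcc).intervalIntegrable
  have hilin : IntervalIntegrable (fun x => f c + f' c * (x - c)) volume (c-h) (c+h) :=
    ((continuous_const.add (continuous_const.mul
      (continuous_id.sub continuous_const))).intervalIntegrable _ _)
  have hlin : ∫ x in (c-h)..(c+h), (f c + f' c * (x - c)) = 2 * h * f c := by
    have h1 : IntervalIntegrable (fun _ : ℝ => f c) volume (c-h) (c+h) :=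
      intervalIntegrable_const
    have h2 : IntervalIntegrable (fun x : ℝ => f' c * (x - c)) volume (c-h) (c+h) :=
      ((continuous_const.mul (continuous_id.sub continuous_const)).intervalIntegrable _ _)
    rw [intervalIntegral.integral_add h1 h2,
      intervalIntegral.integral_const, intervalIntegral.integral_const_mul]
    have : ∫ x in (c-h)..(c+h), (x - c) = ∫ x in (c-h-c)..(c+h-c), x :=
      intervalIntegral.integral_comp_sub_right (fun t => t) c
    rw [this, integral_id, smul_eq_mul]
    ring
  have hsplit : (∫ x in (c-h)..(c+h), f x) - 2 * h * f c
      = ∫ x in (c-h)..(c+h), (f x - (f c + f' c * (x - c))) := by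
    rw [intervalIntegral.integral_sub hif hilin, hlin]
  rw [hsplit]
  have hb : ∀ᵐ t ∂volume.restrict (Set.uIoc (c-h) (c+h)),
      |f t - (f c + f' c * (t - c))| ≤ M * (t - c)^2 / 2 := by
    refine (MeasureTheory.ae_restrict_mem measurableSet_uIoc).mono (fun t ht => ?_)
    rw [Set.uIoc_of_le (by linarith)] at ht
    have ht01 : t ∈ I01 := hsub ⟨le_of_lt ht.1, ht.2⟩
    have := taylor2 f f' f'' M hd1 hd2 hM hc ht01
    calc |f t - (f c + f' c * (t - c))| = |f t - f c - f' c * (t - c)| := by ring_nf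
      _ ≤ M * (t - c)^2/2 := this
  have hbi : IntervalIntegrable (fun t => M * (t - c)^2 / 2) volume (c-h) (c+h) :=
    (((continuous_const.mul ((continuous_id.sub continuous_const).pow 2)).div_const 2
      ).intervalIntegrable _ _)
  have hle : ‖∫ t in (c-h)..(c+h), (f t - (f c + f' c * (t - c)))‖
      ≤ |∫ t in (c-h)..(c+h), M * (t - c)^2 / 2| :=
    intervalIntegral.norm_integral_le_abs_of_norm_le
      (f := fun t => f t - (f c + f' c * (t - c))) (g := fun t => M * (t - c)^2 / 2)
      (by simpa [Real.norm_eq_abs] using hb) hbi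
  have hcomp : ∫ t in (c-h)..(c+h), M * (t - c)^2 / 2 = M * h^3 / 3 := by
    have e1 : ∀ t : ℝ, M * (t - c)^2 / 2 = (M/2) * (t-c)^2 := fun t => by ring
    simp_rw [e1]
    rw [intervalIntegral.integral_const_mul]
    have e2 : (∫ t in (c-h)..(c+h), (t - c)^2) = ∫ t in (c-h-c)..(c+h-c), t^2 :=
      intervalIntegral.integral_comp_sub_right (fun t => t^2) c
    rw [e2, integral_pow]
    push_cast
    ring
  rw [hcomp] at hle
  calc |∫ t in (c-h)..(c+h), (f t - (f c + f' c * (t - c)))| ≤ |M * h^3/3| := hle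
    _ = M * h^3/3 := abs_of_nonneg (by positivity)

lemma midpoint_rule (f f' f'' : ℝ → ℝ) (M : ℝ) (m : ℕ) (hm : 1 ≤ m)
    (hd1 : ∀ x ∈ I01, HasDerivWithinAt f (f' x) I01 x)
    (hd2 : ∀ x ∈ I01, HasDerivWithinAt f' (f'' x) I01 x)
    (hM : ∀ x ∈ I01, |f'' x| ≤ M) :
    |(∫ x in (0:ℝ)..1, f x) - (1/m) * ∑ k ∈ Finset.Icc 1 m, f (gridPt m k)|
      ≤ M / (24 * m^2) := by
  have hm0 : (0:ℝ) < m := by exact_mod_cast Nat.lt_of_lt_of_le Nat.zero_lt_one hm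
  have hM0 : 0 ≤ M := le_trans (abs_nonneg _) (hM 0 ⟨le_refl 0, zero_le_one⟩)
  set a : ℕ → ℝ := fun k => k / m with ha
  have hcontf : ContinuousOn f I01 := fun y hy => (hd1 y hy).continuousWithinAt
  have hsubk : ∀ k, k < m → Set.Icc (a k) (a (k+1)) ⊆ I01 := by
    intro k hk
    apply Set.Icc_subset_Icc
    · positivity
    · rw [div_le_one hm0]
      push_cast
      have : (k:ℝ) + 1 ≤ m := by exact_mod_cast Nat.succ_le_of_lt hk
      linarith
  have hmne : (m:ℝ) ≠ 0 := ne_of_gt hm0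
  have hale : ∀ k : ℕ, a k ≤ a (k+1) := by
    intro k
    have hk : (k:ℝ) ≤ ((k+1 : ℕ) : ℝ) := by push_cast; linarith
    exact div_le_div_of_nonneg_right hk hm0.le
  have hint : ∀ k, k < m → IntervalIntegrable f volume (a k) (a (k+1)) := by
    intro k hk
    apply ContinuousOn.intervalIntegrable
    apply hcontf.mono
    rw [Set.uIcc_of_le (hale k)]
    exact hsubk k hk
  have htot : ∑ k ∈ Finset.range m, ∫ x in (a k)..(a (k+1)), f x = ∫ x in (0:ℝ)..1, f x := by
    rw [intervalIntegral.sum_integral_adjacent_intervals hint]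
    norm_num [ha]
    rw [div_self (ne_of_gt hm0)]
  have hgrid : ∀ k : ℕ, gridPt m (k+1) - 1/(2*m) = a k ∧ gridPt m (k+1) + 1/(2*m) = a (k+1) := by
    intro k
    unfold gridPt
    simp only [ha]
    constructor
    · rw [div_sub_div_same]
      push_cast
      rw [show 2*((k:ℝ)+1)-1-1 = 2*(k:ℝ) from by ring,
        mul_div_mul_left _ _ (two_ne_zero (α := ℝ))]
    · rw [← add_div]
      push_cast
      rw [show 2*((k:ℝ)+1)-1+1 = 2*((k:ℝ)+1) from by ring,
        mul_div_mul_left _ _ (two_ne_zero (α := ℝ))]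
  have key : ∀ k, k < m → |(∫ x in (a k)..(a (k+1)), f x) - (1/m) * f (gridPt m (k+1))|
      ≤ M / (24 * m^3) := by
    intro k hk
    have h2m : (0:ℝ) < 1/(2*m) := by positivity
    have hme := midpoint_err f f' f'' M hd1 hd2 hM h2m
      (c := gridPt m (k+1)) (by rw [(hgrid k).1, (hgrid k).2]; exact hsubk k hk)
    rw [(hgrid k).1, (hgrid k).2] at hme
    have e1 : 2 * (1/(2*(m:ℝ))) * f (gridPt m (k+1)) = (1/m) * f (gridPt m (k+1)) := by
      field_simp
    have e2 : M * (1/(2*(m:ℝ)))^3 / 3 = M / (24 * m^3) := by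
      rw [div_pow, one_pow, show ((2:ℝ)*m)^3 = 8*m^3 from by ring,
        mul_one_div, div_div]
      congr 1
      ring
    rw [e1, e2] at hme
    exact hme
  have hre : ∑ k ∈ Finset.Icc 1 m, f (gridPt m k)
      = ∑ i ∈ Finset.range m, f (gridPt m (i+1)) := by
    rw [← Finset.Ico_add_one_right_eq_Icc, Finset.sum_Ico_eq_sum_range]
    simp only [Nat.add_sub_cancel]
    exact Finset.sum_congr rfl (fun k _ => by rw [add_comm 1 k])
  have hsum : (∫ x in (0:ℝ)..1, f x) - (1/m) * ∑ k ∈ Finset.Icc 1 m, f (gridPt m k)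
      = ∑ k ∈ Finset.range m, ((∫ x in (a k)..(a (k+1)), f x) - (1/m) * f (gridPt m (k+1))) := by
    rw [Finset.sum_sub_distrib, htot, ← Finset.mul_sum, hre]
  rw [hsum]
  calc |∑ k ∈ Finset.range m, ((∫ x in (a k)..(a (k+1)), f x) - (1/m) * f (gridPt m (k+1)))|
      ≤ ∑ k ∈ Finset.range m, |(∫ x in (a k)..(a (k+1)), f x) - (1/m) * f (gridPt m (k+1))| :=
        Finset.abs_sum_le_sum_abs _ _
    _ ≤ ∑ _k ∈ Finset.range m, M / (24 * m^3) := by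
        apply Finset.sum_le_sum
        intro k hk
        exact key k (Finset.mem_range.mp hk)
    _ = m * (M / (24 * m^3)) := by
        rw [Finset.sum_const, Finset.card_range, nsmul_eq_mul]
    _ = M / (24 * m^2) := by field_simp

/-- Let `(w̃_{j,m}, z̃_{j,m}, σ̃_{j,m})` be singular pairs of
`A_m = (κ(ξ_{i,m},ξ_{j,m})/m)_{ij}`, and for `σ̃_{j,m} > 0` set
`ṽ_{j,m} = (1/(σ̃_{j,m}√m)) Σ_l (w̃_{j,m})_l κ(ξ_{l,m},·)`.  Then for `i,j ∈ {1,…,m}` with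
`σ̃_{i,m}, σ̃_{j,m} > 0`:
`|⟨ṽ_{j,m}, ṽ_{i,m}⟩_{L²(0,1)} − δ_{ij}| ≤ C_K²/(6 σ̃_{j,m} σ̃_{i,m} m²)`. -/
theorem stmt_12 (κ κ10 κ01 κ20 κ11 κ02 : ℝ → ℝ → ℝ) (CK : ℝ)
    (hker : IsC2KernelWith κ κ10 κ01 κ20 κ11 κ02 CK)
    (m : ℕ) (hm : 1 ≤ m)
    (w z : ℕ → ℕ → ℝ) (σt : ℕ → ℝ)
    (hwunit : ∀ j ∈ Finset.Icc 1 m, (∑ l ∈ Finset.Icc 1 m, w j l ^ 2) = 1)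
    (hzorth : ∀ j ∈ Finset.Icc 1 m, ∀ j' ∈ Finset.Icc 1 m,
      (∑ l ∈ Finset.Icc 1 m, z j l * z j' l) = if j = j' then (1:ℝ) else 0)
    (hσt : ∀ j ∈ Finset.Icc 1 m, 0 ≤ σt j)
    (hsvd : ∀ j ∈ Finset.Icc 1 m, ∀ i ∈ Finset.Icc 1 m,
      (∑ l ∈ Finset.Icc 1 m, (κ (gridPt m l) (gridPt m i) / m) * w j l) = σt j * z j i)
    (i j : ℕ) (hi : i ∈ Finset.Icc 1 m) (hj : j ∈ Finset.Icc 1 m)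
    (hσi : 0 < σt i) (hσj : 0 < σt j) :
    |(∫ x in (0:ℝ)..1,
        ((1 / (σt j * Real.sqrt m)) * ∑ l ∈ Finset.Icc 1 m, w j l * κ (gridPt m l) x) *
        ((1 / (σt i * Real.sqrt m)) * ∑ l ∈ Finset.Icc 1 m, w i l * κ (gridPt m l) x))
      - (if i = j then (1:ℝ) else 0)|
      ≤ CK ^ 2 / (6 * σt j * σt i * (m : ℝ) ^ 2) := by
  obtain ⟨hd10, hd01, hd20, hd11, hd02, hco, hco10, hco01, hco20, hco11, hco02, hbd⟩ := hker
  set S := Finset.Icc 1 m with hS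
  have hm0 : (0:ℝ) < m := by exact_mod_cast Nat.lt_of_lt_of_le Nat.zero_lt_one hm
  have hmne : (m:ℝ) ≠ 0 := ne_of_gt hm0
  have h00 : (0:ℝ) ∈ I01 := ⟨le_refl 0, zero_le_one⟩
  have hCK : 0 ≤ CK := le_trans (abs_nonneg _) ((hbd 0 h00 0 h00).1)
  have hgm : ∀ l ∈ S, gridPt m l ∈ I01 := by
    intro l hl
    obtain ⟨hl1, hl2⟩ := Finset.mem_Icc.mp hl
    have hl1' : (1:ℝ) ≤ l := by exact_mod_cast hl1
    have hl2' : (l:ℝ) ≤ m := by exact_mod_cast hl2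
    unfold gridPt
    constructor
    · apply div_nonneg (by linarith) (by linarith)
    · rw [div_le_one (by linarith)]
      linarith
  have hsqrtm : Real.sqrt m * Real.sqrt m = m := Real.mul_self_sqrt hm0.le
  have hcka : ∀ a, a ∈ I01 → ContinuousOn (fun x => κ a x) I01 :=
    fun a ha y hy => (hd01 a ha y hy).continuousWithinAt
  -- quadrature error for products
  have hquad : ∀ l ∈ S, ∀ l' ∈ S,
      |(∫ x in (0:ℝ)..1, κ (gridPt m l) x * κ (gridPt m l') x)
        - (1/m) * ∑ k ∈ S, κ (gridPt m l) (gridPt m k) * κ (gridPt m l') (gridPt m k)|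
      ≤ (4*CK^2) / (24*m^2) := by
    intro l hl l' hl'
    have ha : gridPt m l ∈ I01 := hgm l hl
    have hb : gridPt m l' ∈ I01 := hgm l' hl'
    set a := gridPt m l
    set b := gridPt m l'
    exact midpoint_rule (fun x => κ a x * κ b x)
      (fun x => κ01 a x * κ b x + κ a x * κ01 b x)
      (fun x => (κ02 a x * κ b x + κ01 a x * κ01 b x)
        + (κ01 a x * κ01 b x + κ a x * κ02 b x))
      (4*CK^2) m hm
      (fun x hx => (hd01 a ha x hx).mul (hd01 b hb x hx))
      (fun x hx => ((hd02 a ha x hx).mul (hd01 b hb x hx)).add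
        ((hd01 a ha x hx).mul (hd02 b hb x hx)))
      (by
        intro x hx
        obtain ⟨B1, _, B3, _, _, B6⟩ := hbd a ha x hx
        obtain ⟨C1, _, C3, _, _, C6⟩ := hbd b hb x hx
        have h1 : |κ02 a x * κ b x| ≤ CK * CK := by
          rw [abs_mul]; exact mul_le_mul B6 C1 (abs_nonneg _) hCK
        have h2 : |κ01 a x * κ01 b x| ≤ CK * CK := by
          rw [abs_mul]; exact mul_le_mul B3 C3 (abs_nonneg _) hCK
        have h3 : |κ a x * κ02 b x| ≤ CK * CK := by
          rw [abs_mul]; exact mul_le_mul B1 C6 (abs_nonneg _) hCK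
        calc |(κ02 a x * κ b x + κ01 a x * κ01 b x)
              + (κ01 a x * κ01 b x + κ a x * κ02 b x)|
            ≤ |κ02 a x * κ b x + κ01 a x * κ01 b x|
              + |κ01 a x * κ01 b x + κ a x * κ02 b x| := abs_add_le _ _
          _ ≤ (|κ02 a x * κ b x| + |κ01 a x * κ01 b x|)
              + (|κ01 a x * κ01 b x| + |κ a x * κ02 b x|) :=
                add_le_add (abs_add_le _ _) (abs_add_le _ _)
          _ ≤ (CK*CK + CK*CK) + (CK*CK + CK*CK) := by
                exact add_le_add (add_le_add h1 h2) (add_le_add h2 h3)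
          _ = 4*CK^2 := by ring)
  -- integrability of products
  have hFint : ∀ l ∈ S, ∀ l' ∈ S, IntervalIntegrable
      (fun x => κ (gridPt m l) x * κ (gridPt m l') x) volume 0 1 := by
    intro l hl l' hl'
    apply ContinuousOn.intervalIntegrable
    have : Set.uIcc (0:ℝ) 1 = I01 := by rw [Set.uIcc_of_le zero_le_one]; rfl
    rw [this]
    exact (hcka _ (hgm l hl)).mul (hcka _ (hgm l' hl'))
  set c : ℝ := 1/(σt j * σt i * m) with hc
  have hc0 : 0 ≤ c := by positivity
  -- rewrite the integral
  have hc' : (1:ℝ)/(σt j * Real.sqrt m) * (1/(σt i * Real.sqrt m)) = c := by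
    rw [div_mul_div_comm, one_mul, hc]
    congr 1
    rw [mul_mul_mul_comm, hsqrtm]
  have hpt : ∀ x : ℝ,
      ((1 / (σt j * Real.sqrt m)) * ∑ l ∈ S, w j l * κ (gridPt m l) x) *
      ((1 / (σt i * Real.sqrt m)) * ∑ l ∈ S, w i l * κ (gridPt m l) x)
      = ∑ l ∈ S, ∑ l' ∈ S,
          (c * (w j l * w i l')) * (κ (gridPt m l) x * κ (gridPt m l') x) := by
    intro x
    have e1 : ((1 / (σt j * Real.sqrt m)) * ∑ l ∈ S, w j l * κ (gridPt m l) x) *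
      ((1 / (σt i * Real.sqrt m)) * ∑ l ∈ S, w i l * κ (gridPt m l) x)
        = (1/(σt j * Real.sqrt m) * (1/(σt i * Real.sqrt m))) *
          ((∑ l ∈ S, w j l * κ (gridPt m l) x) * (∑ l ∈ S, w i l * κ (gridPt m l) x)) := by
      ring
    rw [e1, hc', Finset.sum_mul_sum, Finset.mul_sum]
    refine Finset.sum_congr rfl (fun l _ => ?_)
    rw [Finset.mul_sum]
    exact Finset.sum_congr rfl (fun l' _ => by ring)
  have hIrw : (∫ x in (0:ℝ)..1,
      ((1 / (σt j * Real.sqrt m)) * ∑ l ∈ S, w j l * κ (gridPt m l) x) *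
      ((1 / (σt i * Real.sqrt m)) * ∑ l ∈ S, w i l * κ (gridPt m l) x))
      = ∑ l ∈ S, ∑ l' ∈ S, (c * (w j l * w i l')) *
          ∫ x in (0:ℝ)..1, κ (gridPt m l) x * κ (gridPt m l') x := by
    rw [intervalIntegral.integral_congr (g := fun x => ∑ l ∈ S, ∑ l' ∈ S,
      (c * (w j l * w i l')) * (κ (gridPt m l) x * κ (gridPt m l') x))
      (fun x _ => hpt x)]
    rw [intervalIntegral.integral_finset_sum (μ := volume) (s := S)
      (f := fun l x => ∑ l' ∈ S, c * (w j l * w i l') * (κ (gridPt m l) x * κ (gridPt m l') x))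
      (fun l hl => by
        have := IntervalIntegrable.sum (μ := volume) (a := (0:ℝ)) (b := 1) S
          (f := fun l' x => c * (w j l * w i l') * (κ (gridPt m l) x * κ (gridPt m l') x))
          (fun l' hl' => (hFint l hl l' hl').const_mul _)
        simpa [Finset.sum_fn] using this)]
    refine Finset.sum_congr rfl (fun l hl => ?_)
    rw [intervalIntegral.integral_finset_sum (μ := volume) (s := S)
      (f := fun l' x => c * (w j l * w i l') * (κ (gridPt m l) x * κ (gridPt m l') x))
      (fun l' hl' => (hFint l hl l' hl').const_mul _)]
    exact Finset.sum_congr rfl (fun l' hl' => intervalIntegral.integral_const_mul _ _)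
  -- abbreviations
  have hAsum : ∀ p ∈ S, ∀ k ∈ S,
      ∑ l ∈ S, w p l * κ (gridPt m l) (gridPt m k) = m * (σt p * z p k) := by
    intro p hp k hk
    have h1 := hsvd p hp k hk
    have h2 : ∑ l ∈ S, w p l * κ (gridPt m l) (gridPt m k)
        = m * ∑ l ∈ S, (κ (gridPt m l) (gridPt m k) / m) * w p l := by
      rw [Finset.mul_sum]
      exact Finset.sum_congr rfl (fun l _ => by field_simp)
    rw [h2, h1]
  have hQsum : ∑ l ∈ S, ∑ l' ∈ S, (c * (w j l * w i l')) *
        ((1/(m:ℝ)) * ∑ k ∈ S, κ (gridPt m l) (gridPt m k) * κ (gridPt m l') (gridPt m k))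
      = if i = j then (1:ℝ) else 0 := by
    have e1 : ∀ l ∈ S, ∀ l' ∈ S, (c * (w j l * w i l')) *
        ((1/(m:ℝ)) * ∑ k ∈ S, κ (gridPt m l) (gridPt m k) * κ (gridPt m l') (gridPt m k))
        = ∑ k ∈ S, (c * (1/(m:ℝ))) *
            ((w j l * κ (gridPt m l) (gridPt m k)) * (w i l' * κ (gridPt m l') (gridPt m k))) := by
      intro l _ l' _
      rw [Finset.mul_sum]
      rw [Finset.mul_sum]
      exact Finset.sum_congr rfl (fun k _ => by ring)
    rw [Finset.sum_congr rfl (fun l hl => Finset.sum_congr rfl (fun l' hl' => e1 l hl l' hl'))]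
    have swap1 : ∑ l ∈ S, ∑ l' ∈ S, ∑ k ∈ S, (c * (1/(m:ℝ))) *
            ((w j l * κ (gridPt m l) (gridPt m k)) * (w i l' * κ (gridPt m l') (gridPt m k)))
        = ∑ k ∈ S, ∑ l ∈ S, ∑ l' ∈ S, (c * (1/(m:ℝ))) *
            ((w j l * κ (gridPt m l) (gridPt m k)) * (w i l' * κ (gridPt m l') (gridPt m k))) := by
      rw [Finset.sum_congr rfl (fun l _ => Finset.sum_comm (s := S) (t := S))]
      exact Finset.sum_comm
    rw [swap1]
    have e2 : ∀ k ∈ S, ∑ l ∈ S, ∑ l' ∈ S, (c * (1/(m:ℝ))) *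
            ((w j l * κ (gridPt m l) (gridPt m k)) * (w i l' * κ (gridPt m l') (gridPt m k)))
        = z j k * z i k := by
      intro k hk
      have e3 : ∑ l ∈ S, ∑ l' ∈ S, (c * (1/(m:ℝ))) *
            ((w j l * κ (gridPt m l) (gridPt m k)) * (w i l' * κ (gridPt m l') (gridPt m k)))
          = (c * (1/(m:ℝ))) * ((∑ l ∈ S, w j l * κ (gridPt m l) (gridPt m k)) *
              (∑ l' ∈ S, w i l' * κ (gridPt m l') (gridPt m k))) := by
        rw [Finset.sum_mul_sum, Finset.mul_sum]
        refine Finset.sum_congr rfl (fun l _ => ?_)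
        rw [Finset.mul_sum]
      rw [e3, hAsum j hj k hk, hAsum i hi k hk, hc]
      field_simp
    rw [Finset.sum_congr rfl e2, hzorth j hj i hi]
    by_cases h : i = j
    · simp [h]
    · have h' : ¬ (j = i) := fun hh => h hh.symm
      simp [h, h']
  -- Cauchy-Schwarz
  have hCS : ∀ p, p ∈ S → (∑ l ∈ S, |w p l|) ≤ Real.sqrt m := by
    intro p hp
    have h1 := Finset.sum_mul_sq_le_sq_mul_sq S (fun l => |w p l|) (fun _ => (1:ℝ))
    simp only [mul_one, one_pow, sq_abs] at h1
    rw [hwunit p hp, Finset.sum_const, hS, Nat.card_Icc] at h1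
    simp only [Nat.add_sub_cancel, nsmul_eq_mul, mul_one, one_mul] at h1
    rw [show Real.sqrt m = Real.sqrt m from rfl]
    have h2 : (0:ℝ) ≤ ∑ l ∈ S, |w p l| := Finset.sum_nonneg (fun l _ => abs_nonneg _)
    rw [show ((m:ℝ)) = ((m:ℕ):ℝ) from rfl]
    exact (Real.le_sqrt h2 hm0.le).mpr h1
  -- the error terms
  set B : ℝ := 4*CK^2/(24*(m:ℝ)^2) with hB
  have hB0 : 0 ≤ B := by positivity
  have hEsum : |∑ l ∈ S, ∑ l' ∈ S, (c * (w j l * w i l')) *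
        ((∫ x in (0:ℝ)..1, κ (gridPt m l) x * κ (gridPt m l') x)
          - (1/(m:ℝ)) * ∑ k ∈ S, κ (gridPt m l) (gridPt m k) * κ (gridPt m l') (gridPt m k))|
      ≤ c * (m:ℝ) * B := by
    calc |∑ l ∈ S, ∑ l' ∈ S, (c * (w j l * w i l')) *
          ((∫ x in (0:ℝ)..1, κ (gridPt m l) x * κ (gridPt m l') x)
            - (1/(m:ℝ)) * ∑ k ∈ S, κ (gridPt m l) (gridPt m k) * κ (gridPt m l') (gridPt m k))|
        ≤ ∑ l ∈ S, |∑ l' ∈ S, (c * (w j l * w i l')) *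
          ((∫ x in (0:ℝ)..1, κ (gridPt m l) x * κ (gridPt m l') x)
            - (1/(m:ℝ)) * ∑ k ∈ S, κ (gridPt m l) (gridPt m k) * κ (gridPt m l') (gridPt m k))| :=
          Finset.abs_sum_le_sum_abs _ _
      _ ≤ ∑ l ∈ S, ∑ l' ∈ S, |(c * (w j l * w i l')) *
          ((∫ x in (0:ℝ)..1, κ (gridPt m l) x * κ (gridPt m l') x)
            - (1/(m:ℝ)) * ∑ k ∈ S, κ (gridPt m l) (gridPt m k) * κ (gridPt m l') (gridPt m k))| :=
          Finset.sum_le_sum (fun l _ => Finset.abs_sum_le_sum_abs _ _)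
      _ ≤ ∑ l ∈ S, ∑ l' ∈ S, (c * B) * (|w j l| * |w i l'|) := by
          refine Finset.sum_le_sum (fun l hl => Finset.sum_le_sum (fun l' hl' => ?_))
          rw [abs_mul, abs_mul, abs_mul, abs_of_nonneg hc0]
          have := hquad l hl l' hl'
          calc c * (|w j l| * |w i l'|) * |_| ≤ c * (|w j l| * |w i l'|) * B := by
                apply mul_le_mul_of_nonneg_left this (by positivity)
            _ = (c * B) * (|w j l| * |w i l'|) := by ring
      _ = (c * B) * ((∑ l ∈ S, |w j l|) * (∑ l' ∈ S, |w i l'|)) := by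
          rw [Finset.sum_mul_sum, Finset.mul_sum]
          refine Finset.sum_congr rfl (fun l _ => ?_)
          rw [Finset.mul_sum]
      _ ≤ (c * B) * (Real.sqrt m * Real.sqrt m) := by
          apply mul_le_mul_of_nonneg_left _ (by positivity)
          apply mul_le_mul (hCS j hj) (hCS i hi)
            (Finset.sum_nonneg (fun l _ => abs_nonneg _)) (Real.sqrt_nonneg _)
      _ = c * (m:ℝ) * B := by rw [hsqrtm]; ring
  -- put it together
  rw [hIrw]
  have hsplit : ∑ l ∈ S, ∑ l' ∈ S, (c * (w j l * w i l')) *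
        (∫ x in (0:ℝ)..1, κ (gridPt m l) x * κ (gridPt m l') x)
      = (∑ l ∈ S, ∑ l' ∈ S, (c * (w j l * w i l')) *
          ((1/(m:ℝ)) * ∑ k ∈ S, κ (gridPt m l) (gridPt m k) * κ (gridPt m l') (gridPt m k)))
        + ∑ l ∈ S, ∑ l' ∈ S, (c * (w j l * w i l')) *
          ((∫ x in (0:ℝ)..1, κ (gridPt m l) x * κ (gridPt m l') x)
            - (1/(m:ℝ)) * ∑ k ∈ S, κ (gridPt m l) (gridPt m k) * κ (gridPt m l') (gridPt m k)) := by
    rw [← Finset.sum_add_distrib]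
    refine Finset.sum_congr rfl (fun l _ => ?_)
    rw [← Finset.sum_add_distrib]
    exact Finset.sum_congr rfl (fun l' _ => by ring)
  rw [hsplit, hQsum, add_sub_cancel_left]
  refine le_trans hEsum (le_of_eq ?_)
  rw [hc, hB]
  field_simp
  ring
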